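/- Let L > 0, let μ*, μ be real numbers with Δ := μ* − μ > 0, let ω ≥ 0, T_S ≥ 0 and N > 0 be real numbers, and let U, U^S, U*, U^{S*} be real numbers satisfying: (i) μ* ≤ min(U*, U^{S*}); (ii) U ≤ μ + 2·√(2L/N); (iii) U^S ≤ μ + 2·√(2L/(N + T_S)) + (T_S/(N + T_S))·ω. If N > 32·L/Δ² − T_S·(max(1 − ω/Δ, 0))², then min(U, U^S) < min(U*, U^{S*}). -/

import Mathlib

set_option maxHeartbeats 1000000 in
/-- Deterministic core of the arm-elimination lemma for the MIN-UCB policy. -/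
theorem minucb_elimination
    (L μstar μ ω TS N U US Ustar USstar : ℝ)
    (hL : 0 < L) (hΔ : 0 < μstar - μ) (hω : 0 ≤ ω) (hTS : 0 ≤ TS) (hN : 0 < N)
    (h1 : μstar ≤ min Ustar USstar)
    (h2 : U ≤ μ + 2 * Real.sqrt (2 * L / N))
    (h3 : US ≤ μ + 2 * Real.sqrt (2 * L / (N + TS)) + (TS / (N + TS)) * ω)
    (hNbig : N > 32 * L / (μstar - μ) ^ 2
        - TS * (max (1 - ω / (μstar - μ)) 0) ^ 2) :
    min U US < min Ustar USstar := by
  obtain ⟨Δ, hΔdef⟩ : ∃ x : ℝ, x = μstar - μ := ⟨_, rfl⟩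
  rw [← hΔdef] at hNbig hΔ
  have hΔ0 : (0:ℝ) < Δ := hΔ
  have hΔ2 : (0:ℝ) < Δ ^ 2 := by positivity
  by_cases hcase : 8 * L < N * Δ ^ 2
  · -- online UCB branch
    have hs : Real.sqrt (2 * L / N) < Δ / 2 := by
      rw [show Δ / 2 = Real.sqrt ((Δ / 2) ^ 2) from (Real.sqrt_sq (by positivity)).symm]
      apply Real.sqrt_lt_sqrt (by positivity)
      rw [div_lt_iff₀ hN]
      have hexp : (Δ / 2) ^ 2 * N = N * Δ ^ 2 / 4 := by ring
      rw [hexp]; linarith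
    have hU : U < μstar := by
      have : U < μ + Δ := by linarith
      linarith [hΔdef]
    calc min U US ≤ U := min_le_left _ _
      _ < μstar := hU
      _ ≤ min Ustar USstar := h1
  · push_neg at hcase
    have hωΔ : ω < Δ := by
      by_contra hge
      push_neg at hge
      have hmax : max (1 - ω / Δ) 0 = 0 := by
        apply max_eq_right
        have : 1 ≤ ω / Δ := (le_div_iff₀ hΔ0).mpr (by linarith)
        linarith
      rw [hmax] at hNbig
      simp only [ne_eq, OfNat.ofNat_ne_zero, not_false_eq_true, zero_pow, mul_zero,
        sub_zero] at hNbig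
      have : 32 * L < N * Δ ^ 2 := (div_lt_iff₀ hΔ2).mp hNbig
      linarith
    obtain ⟨m, hm_def⟩ : ∃ x : ℝ, x = 1 - ω / Δ := ⟨_, rfl⟩
    have hm0 : 0 < m := by
      have : ω / Δ < 1 := (div_lt_one hΔ0).mpr hωΔ
      rw [hm_def]; linarith
    have hm1 : m ≤ 1 := by
      have : 0 ≤ ω / Δ := div_nonneg hω hΔ0.le
      rw [hm_def]; linarith
    have hωm : ω = Δ * (1 - m) := by
      rw [hm_def]; field_simp; ring
    have hmax : max (1 - ω / Δ) 0 = m := by rw [hm_def]; exact max_eq_left (hm_def ▸ hm0.le)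
    rw [hmax] at hNbig
    have hkey0 : 32 * L < (N + TS * m ^ 2) * Δ ^ 2 := by
      rw [gt_iff_lt, sub_lt_iff_lt_add, div_lt_iff₀ hΔ2] at hNbig
      nlinarith [hNbig]
    have hs0 : (0:ℝ) < N + TS := by linarith
    have hkey : 8 * L * (N + TS) < Δ ^ 2 * (N + TS * m) ^ 2 := by
      have h24 : 24 * L < TS * m ^ 2 * Δ ^ 2 := by nlinarith
      nlinarith [mul_nonneg (mul_nonneg hN.le hTS) (mul_nonneg hm0.le (sub_nonneg.mpr hm1)),
        sq_nonneg N, mul_pos hN hs0, sq_nonneg (Δ * N),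
        mul_lt_mul_of_pos_right h24 hs0, mul_nonneg hTS hm0.le]
    have hpω : (TS / (N + TS)) * ω ≤ ω := by
      have hp1 : TS / (N + TS) ≤ 1 := (div_le_one hs0).mpr (by linarith)
      nlinarith
    have hrhs : 0 < Δ - (TS / (N + TS)) * ω := by linarith
    have heq : Δ - (TS / (N + TS)) * ω = Δ * (N + TS * m) / (N + TS) := by
      rw [hωm]; field_simp; ring
    have hNTSm : 0 < N + TS * m := by positivity
    have hsq : Real.sqrt (2 * L / (N + TS)) < (Δ - (TS / (N + TS)) * ω) / 2 := by
      rw [show (Δ - (TS / (N + TS)) * ω) / 2 =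
          Real.sqrt (((Δ - (TS / (N + TS)) * ω) / 2) ^ 2) from
        (Real.sqrt_sq (by positivity)).symm]
      apply Real.sqrt_lt_sqrt (by positivity)
      rw [heq, div_lt_iff₀ hs0]
      have expand : ((Δ * (N + TS * m) / (N + TS)) / 2) ^ 2 * (N + TS) =
          Δ ^ 2 * (N + TS * m) ^ 2 / (4 * (N + TS)) := by
        field_simp; ring
      rw [expand, lt_div_iff₀ (by positivity)]
      nlinarith [hkey]
    have hUS : US < μstar := by
      have : US < μ + Δ := by linarith
      linarith [hΔdef]
    calc min U US ≤ US := min_le_right _ _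
      _ < μstar := hUS
      _ ≤ min Ustar USstar := h1
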